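/- If a maximal monotone single-valued linear relation A : X → X is locally bounded, then dom A = X. -/

import Mathlib

/-- A locally bounded, single-valued, maximal monotone linear relation has full domain. -/
theorem locally_bounded_maximal_monotone_linear_relation_full_domain
    {X : Type*} [NormedAddCommGroup X] [InnerProductSpace ℝ X] [CompleteSpace X]
    (A : X → Set X)
    (hlin : ∃ G : Submodule ℝ (X × X), ∀ x y, y ∈ A x ↔ (x, y) ∈ G)
    (hmono : ∀ x x' y y', x' ∈ A x → y' ∈ A y → (0:ℝ) ≤ inner ℝ (x - y) (x' - y'))
    (hmax : ∀ a a', (∀ x x', x' ∈ A x → (0:ℝ) ≤ inner ℝ (x - a) (x' - a')) → a' ∈ A a)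
    (hsv : ∀ x, (A x).Nonempty → ∃ x', A x = {x'})
    (hlb : ∀ x : X, ∃ ε > (0:ℝ), ∃ M : ℝ,
      ∀ y y', y' ∈ A y → ‖y - x‖ < ε → ‖y'‖ ≤ M) :
    ∀ x : X, (A x).Nonempty := by
  classical
  obtain ⟨G, hG⟩ := hlin
  have hzero : (0:X) ∈ A 0 := (hG 0 0).2 (by exact Submodule.zero_mem G)
  -- A 0 = {0}
  have hA0 : ∀ y', y' ∈ A 0 → y' = 0 := by
    intro y' hy'
    obtain ⟨ε, hε, M, hM⟩ := hlb 0
    by_contra hne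
    have hy : 0 < ‖y'‖ := norm_pos_iff.2 hne
    have htm : ∀ t : ℝ, t • y' ∈ A 0 := by
      intro t
      have h1 : (t • ((0:X), y')) ∈ G := Submodule.smul_mem G t ((hG 0 y').1 hy')
      have h2 : ((0:X), t • y') ∈ G := by simpa [Prod.smul_mk] using h1
      exact (hG 0 (t • y')).2 h2
    have hb := hM 0 (((M+1)/‖y'‖) • y') (htm _) (by simpa using hε)
    rw [norm_smul, Real.norm_eq_abs] at hb
    have hM0 : 0 ≤ M := le_trans (norm_nonneg _) (hM 0 y' hy' (by simpa using hε))
    have : |(M+1)/‖y'‖| * ‖y'‖ = M + 1 := by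
      rw [abs_of_pos (by positivity), div_mul_cancel₀]
      exact ne_of_gt hy
    rw [this] at hb
    linarith
  -- the domain
  set D : Submodule ℝ X := G.map (LinearMap.fst ℝ X X) with hD
  have hmemD : ∀ {y y' : X}, y' ∈ A y → y ∈ D := by
    intro y y' h
    exact ⟨(y, y'), (hG y y').1 h, rfl⟩
  -- the selection g
  set g : X → X := fun y => if h : (A y).Nonempty then (hsv y h).choose else 0 with hgdef
  have hg : ∀ {y y' : X}, y' ∈ A y → A y = {g y} := by
    intro y y' h
    have hne : (A y).Nonempty := ⟨y', h⟩
    simp only [hgdef, dif_pos hne]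
    exact (hsv y hne).choose_spec
  have hgmem : ∀ y ∈ D, g y ∈ A y := by
    rintro y ⟨⟨y₁, y'⟩, hm, rfl⟩
    have h : y' ∈ A y₁ := (hG _ _).2 hm
    simp only [LinearMap.fst_apply]
    rw [hg h]; rfl
  have hgval : ∀ {y y' : X}, y' ∈ A y → y' = g y := by
    intro y y' h
    have := hg h
    rw [this] at h
    exact h
  -- D is dense
  have horth : Dᗮ = ⊥ := by
    rw [Submodule.eq_bot_iff]
    intro v hv
    have : v ∈ A 0 := by
      apply hmax
      intro u u' hu'
      have h1 : (0:ℝ) ≤ inner ℝ (u - 0) (u' - 0) := hmono u u' 0 0 hu' hzero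
      have h2 : (inner ℝ u v : ℝ) = 0 := (Submodule.mem_orthogonal D v).1 hv u (hmemD hu')
      have : (inner ℝ (u - 0) (u' - v) : ℝ) = inner ℝ (u - 0) (u' - 0) - inner ℝ u v := by
        simp [inner_sub_right]
      rw [this, h2]
      linarith
    exact hA0 v this
  have hdense : Dense (D : Set X) := by
    have : D.topologicalClosure = ⊤ := by
      rw [← Submodule.orthogonal_orthogonal_eq_closure, horth, Submodule.bot_orthogonal_eq_top]
    rw [dense_iff_closure_eq]
    have := congrArg (fun K : Submodule ℝ X => (K : Set X)) this
    simpa [Submodule.topologicalClosure_coe] using this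
  -- the linear map T on D
  have hadd : ∀ a b : D, g ((a:X) + b) = g a + g b := by
    intro a b
    have ha := (hG _ _).1 (hgmem a a.2)
    have hb := (hG _ _).1 (hgmem b b.2)
    have hsum : ((a:X) + b, g a + g b) ∈ G := by
      simpa using Submodule.add_mem G ha hb
    exact (hgval ((hG _ _).2 hsum)).symm
  have hsmul : ∀ (c : ℝ) (a : D), g (c • (a:X)) = c • g a := by
    intro c a
    have ha := (hG _ _).1 (hgmem a a.2)
    have hs : (c • (a:X), c • g a) ∈ G := by
      simpa [Prod.smul_mk] using Submodule.smul_mem G c ha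
    exact (hgval ((hG _ _).2 hs)).symm
  set T : D →ₗ[ℝ] X :=
    { toFun := fun y => g (y : X)
      map_add' := fun a b => hadd a b
      map_smul' := fun c a => hsmul c a } with hT
  -- bound on T
  obtain ⟨ε, hε, M, hM⟩ := hlb 0
  have hM0 : 0 ≤ M := le_trans (norm_nonneg _) (hM 0 0 hzero (by simpa using hε))
  have hTbound : ∀ y : D, ‖T y‖ ≤ (2 * M / ε) * ‖y‖ := by
    intro y
    rcases eq_or_ne (y : X) 0 with h0 | h0
    · have : T y = g (0 : X) := by simp [hT, h0]
      have hg0 : g (0:X) = 0 := (hgval hzero).symm ▸ (hA0 _ (hgmem 0 (Submodule.zero_mem D)))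
      rw [this, hg0]
      simp only [norm_zero]
      positivity
    · have hy : 0 < ‖(y:X)‖ := norm_pos_iff.2 h0
      set c : ℝ := ε / (2 * ‖(y:X)‖) with hc
      have hcpos : 0 < c := by positivity
      have hnorm : ‖c • (y:X)‖ < ε := by
        rw [norm_smul, Real.norm_eq_abs, abs_of_pos hcpos, hc]
        rw [div_mul_eq_mul_div, mul_comm]
        rw [div_lt_iff₀ (by positivity)]
        nlinarith
      have hmem : c • (y:X) ∈ D := Submodule.smul_mem D c y.2
      have h1 : ‖g (c • (y:X))‖ ≤ M :=
        hM _ _ (hgmem _ hmem) (by simpa using hnorm)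
      rw [hsmul c y, norm_smul, Real.norm_eq_abs, abs_of_pos hcpos, hc] at h1
      have h2 : ε / (2 * ‖(y:X)‖) * ‖g (y:X)‖ ≤ M := h1
      have : ‖g (y:X)‖ ≤ 2 * M / ε * ‖(y:X)‖ := by
        rw [div_mul_eq_mul_div, mul_comm] at h2
        rw [div_le_iff₀ (by positivity)] at h2
        rw [div_mul_eq_mul_div, le_div_iff₀ hε]
        nlinarith
      simpa [hT] using this
  set Tc : D →L[ℝ] X := T.mkContinuous (2 * M / ε) hTbound with hTc
  -- extend
  have h_e : IsUniformInducing (D.subtypeL : D →L[ℝ] X) :=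
    isometry_subtype_coe.isUniformInducing
  have h_dense : DenseRange (D.subtypeL : D →L[ℝ] X) := by
    have : Set.range ((D.subtypeL : D →L[ℝ] X)) = (D : Set X) := Subtype.range_coe
    rw [DenseRange, this]
    exact hdense
  set F : X →L[ℝ] X := Tc.extend D.subtypeL with hF
  have hFeq : ∀ y : D, F (y : X) = g (y : X) := by
    intro y
    have := ContinuousLinearMap.extend_eq (f := Tc) (e := D.subtypeL) h_dense h_e y
    simpa [hF, hTc, hT] using this
  -- conclude
  intro x
  have hFx : F x ∈ A x := by
    apply hmax
    intro u u' hu'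
    have hclosed : IsClosed {z : X | (0:ℝ) ≤ inner ℝ (u - z) (u' - F z)} := by
      apply isClosed_le continuous_const
      exact Continuous.inner (continuous_const.sub continuous_id)
        (continuous_const.sub F.continuous)
    have hsub : (D : Set X) ⊆ {z : X | (0:ℝ) ≤ inner ℝ (u - z) (u' - F z)} := by
      intro z hz
      have : F z = g z := hFeq ⟨z, hz⟩
      simp only [Set.mem_setOf_eq, this]
      exact hmono u u' z (g z) hu' (hgmem z hz)
    have : x ∈ closure (D : Set X) := hdense x
    have := closure_minimal hsub hclosed this
    exact this
  exact ⟨F x, hFx⟩
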